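/- For every integer d ≥ 1, d² divides ∑_{k ∣ d} μ(k) · (−1)^{d/k} · C(2d/k − 1, d/k − 1). -/

import Mathlib

open scoped BigOperators

open Finset
open scoped Nat


/-- The index set: `i ∈ [1, p*t]` with `p ∤ i`. -/
def Iset (p t : ℕ) : Finset ℕ := (Finset.Icc 1 (p*t)).filter (fun i => ¬ p ∣ i)

lemma Iset_mem {p t i : ℕ} (hi : i ∈ Iset p t) : 1 ≤ i ∧ i ≤ p*t ∧ ¬ p ∣ i := by
  simp only [Iset, mem_filter, Finset.mem_Icc] at hi
  exact ⟨hi.1.1, hi.1.2, hi.2⟩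

lemma Iset_mem_iff {p t i : ℕ} : i ∈ Iset p t ↔ 1 ≤ i ∧ i ≤ p*t ∧ ¬ p ∣ i := by
  simp only [Iset, mem_filter, Finset.mem_Icc, and_assoc]

lemma Iset_lt {p t i : ℕ} (hp : 0 < p) (hi : i ∈ Iset p t) : i < p*t := by
  obtain ⟨h1, h2, h3⟩ := Iset_mem hi
  rcases lt_or_eq_of_le h2 with h | h
  · exact h
  · exact absurd (h ▸ Dvd.intro t rfl) h3

lemma Iset_sub_mem {p t i : ℕ} (hp : 0 < p) (hi : i ∈ Iset p t) : p*t - i ∈ Iset p t := by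
  obtain ⟨h1, h2, h3⟩ := Iset_mem hi
  have hlt := Iset_lt hp hi
  refine Iset_mem_iff.mpr ⟨by omega, by omega, fun hdvd => h3 ?_⟩
  have : p ∣ (p*t - (p*t - i)) := Nat.dvd_sub (Dvd.intro t rfl) hdvd
  rwa [Nat.sub_sub_self h2] at this

theorem prodCong (p t : ℕ) (hp : p.Prime) (ht : 0 < t) :
    (((∏ i ∈ Iset p t, (p*t + i) : ℕ)) : ZMod (p^(2*(t.factorization p + 1)))) =
      (-1)^(t*(p+1)) * (((∏ i ∈ Iset p t, i : ℕ)) : ZMod (p^(2*(t.factorization p + 1)))) := by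
  set b := t.factorization p + 1 with hb
  set N := p^(2*b) with hN
  set R := ZMod N
  letI : CommRing R := inferInstanceAs (CommRing (ZMod N))
  set c := p * t with hc
  have hp1 : 1 < p := hp.one_lt
  have hN0 : N ≠ 0 := pow_ne_zero _ (by omega)
  -- units
  have hunit : ∀ i ∈ Iset p t, IsUnit ((i : ℕ) : R) := by
    intro i hi
    obtain ⟨-, -, h3⟩ := Iset_mem hi
    rw [ZMod.isUnit_iff_coprime]
    exact (Nat.Coprime.pow_right _ (((Nat.Prime.coprime_iff_not_dvd hp).mpr h3).symm))
  -- c^2 = 0 in R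
  have hpbc : p^b ∣ c := by
    rw [hb, pow_succ, hc, mul_comm (p ^ t.factorization p) p]
    exact Nat.mul_dvd_mul_left p (Nat.ordProj_dvd t p)
  have hc2 : ((c : ℕ) : R)^2 = 0 := by
    have hdvd : N ∣ c^2 := by
      rw [hN, mul_comm 2 b, pow_mul]
      exact pow_dvd_pow_of_dvd hpbc 2
    have := (ZMod.natCast_eq_zero_iff (c^2) N).mpr hdvd
    push_cast at this
    exact this
  -- the pair computation
  have hpair : ∀ a ∈ Iset p t,
      (((c:ℕ):R) + a) * ((a:ℕ):R)⁻¹ * ((((c:ℕ):R) + ((c - a : ℕ):R)) * ((c - a : ℕ):R)⁻¹) = 1 := by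
    intro a ha
    obtain ⟨h1, h2, h3⟩ := Iset_mem ha
    have hgm := Iset_sub_mem hp.pos ha
    have hau := hunit a ha
    have hgu := hunit _ hgm
    have hcast : ((c - a : ℕ) : R) = ((c:ℕ):R) - ((a:ℕ):R) := by
      rw [Nat.cast_sub (show a ≤ c from h2)]
    have key : (((c:ℕ):R) + a) * (((c:ℕ):R) + (((c:ℕ):R) - a)) = (a:R) * (((c:ℕ):R) - a) := by
      linear_combination (2 : R) * hc2
    calc (((c:ℕ):R) + a) * ((a:ℕ):R)⁻¹ * ((((c:ℕ):R) + ((c - a : ℕ):R)) * ((c - a : ℕ):R)⁻¹)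
        = ((((c:ℕ):R) + a) * (((c:ℕ):R) + ((c - a : ℕ):R))) * (((a:ℕ):R)⁻¹ * ((c - a : ℕ):R)⁻¹) := by
          ring
      _ = ((a:R) * ((c - a : ℕ):R)) * (((a:ℕ):R)⁻¹ * ((c - a : ℕ):R)⁻¹) := by
          rw [hcast]; rw [key]
      _ = ((a:R) * ((a:ℕ):R)⁻¹) * (((c - a : ℕ):R) * ((c - a : ℕ):R)⁻¹) := by ring
      _ = 1 := by rw [ZMod.mul_inv_of_unit _ hau, ZMod.mul_inv_of_unit _ hgu, one_mul]
  -- product of f over the set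
  have hprod_split : ∀ s : Finset ℕ, s ⊆ Iset p t →
      (∏ i ∈ s, ((((c:ℕ):R) + i) * ((i:ℕ):R)⁻¹)) * (∏ i ∈ s, ((i:ℕ):R)) =
        ∏ i ∈ s, (((c:ℕ):R) + i) := by
    intro s hs
    rw [← prod_mul_distrib]
    refine prod_congr rfl fun i hi => ?_
    rw [mul_assoc, ZMod.inv_mul_of_unit _ (hunit i (hs hi)), mul_one]
  -- rewrite the goal through casts
  rw [Nat.cast_prod, Nat.cast_prod]
  simp only [Nat.cast_add]
  have hsplit := hprod_split (Iset p t) (Finset.Subset.refl _)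
  by_cases hcase : p = 2 ∧ ¬ Even t
  · -- p = 2 and t odd
    obtain ⟨hp2, htodd⟩ := hcase
    have ht2 : ¬ (2:ℕ) ∣ t := fun h => htodd (even_iff_two_dvd.mpr h)
    have hb1 : b = 1 := by
      rw [hb, Nat.factorization_eq_zero_of_not_dvd (by rwa [hp2])]
    have htm : t ∈ Iset p t := by
      refine Iset_mem_iff.mpr ⟨ht, Nat.le_mul_of_pos_left t hp.pos, ?_⟩
      rwa [hp2]
    have herase : ∏ i ∈ (Iset p t).erase t, ((((c:ℕ):R) + i) * ((i:ℕ):R)⁻¹) = 1 := by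
      refine prod_involution (fun a _ => c - a) ?_ ?_ ?_ ?_
      · intro a ha
        exact hpair a (mem_of_mem_erase ha)
      · intro a ha _ heq
        have heq' : c - a = a := heq
        have h' := Iset_mem (mem_of_mem_erase ha)
        have hne := (Finset.mem_erase.mp ha).1
        have hct : c = 2 * t := by rw [hc, hp2]
        omega
      · intro a ha
        have h' := Iset_mem (mem_of_mem_erase ha)
        have hne := (Finset.mem_erase.mp ha).1
        refine Finset.mem_erase.mpr ⟨?_, Iset_sub_mem hp.pos (mem_of_mem_erase ha)⟩
        have hct : c = 2 * t := by rw [hc, hp2]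
        show c - a ≠ t
        omega
      · intro a ha
        have h' := Iset_mem (mem_of_mem_erase ha)
        show c - (c - a) = a
        omega
    have hft : (((c:ℕ):R) + (t:R)) * ((t:ℕ):R)⁻¹ = 3 := by
      have h3 : ((c:ℕ):R) + (t:R) = 3 * (t:R) := by
        rw [hc, hp2]; push_cast; ring
      rw [h3, mul_assoc, ZMod.mul_inv_of_unit _ (hunit t htm), mul_one]
    have hprodf : ∏ i ∈ Iset p t, ((((c:ℕ):R) + i) * ((i:ℕ):R)⁻¹) = 3 := by
      rw [← Finset.mul_prod_erase _ _ htm, herase, mul_one, hft]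
    have h40 : ((4:ℕ):R) = 0 := by
      rw [ZMod.natCast_eq_zero_iff, hN, hb1, hp2]
      decide
    have h3neg : (3 : R) = (-1)^(t*(p+1)) := by
      have hodd : Odd (t*(p+1)) := by
        rw [hp2]
        exact (Nat.odd_iff.mpr (by omega)).mul (by decide)
      rw [hodd.neg_one_pow]
      push_cast at h40
      linear_combination h40
    rw [← hsplit, hprodf, h3neg]
  · -- remaining case: the sign is +1
    have heven : Even (t*(p+1)) := by
      rcases Nat.Prime.eq_two_or_odd' hp with h2 | hodd
      · have hte : Even t := not_not.mp (fun h => hcase ⟨h2, h⟩)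
        exact hte.mul_right _
      · exact (Odd.add_one hodd).mul_left _
    have hprodf : ∏ i ∈ Iset p t, ((((c:ℕ):R) + i) * ((i:ℕ):R)⁻¹) = 1 := by
      refine prod_involution (fun a _ => c - a) ?_ ?_ ?_ ?_
      · intro a ha
        exact hpair a ha
      · intro a ha _ heq
        have heq' : c - a = a := heq
        have h' := Iset_mem ha
        have hc2a : c = 2 * a := by omega
        rcases Nat.Prime.eq_two_or_odd' hp with h2 | hodd
        · have hte : Even t := not_not.mp (fun h => hcase ⟨h2, h⟩)
          obtain ⟨s, hs⟩ := hte
          subst h2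
          have hnda := h'.2.2
          omega
        · have hpc : p ∣ c := by rw [hc]; exact Dvd.intro t rfl
          rw [hc2a] at hpc
          rcases (Nat.Prime.dvd_mul hp).mp hpc with h | h
          · have h2 := Nat.le_of_dvd (by omega) h
            have := Nat.odd_iff.mp hodd
            have := hp.two_le
            omega
          · exact h'.2.2 h
      · intro a ha
        exact Iset_sub_mem hp.pos ha
      · intro a ha
        have h' := Iset_mem ha
        show c - (c - a) = a
        omega
    rw [← hsplit, hprodf, heven.neg_one_pow, one_mul]

theorem keyCong (p t : ℕ) (hp : p.Prime) (ht : 0 < t) :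
    ((p:ℤ)) ^ (2*(t.factorization p + 1)) ∣
      ((∏ i ∈ Iset p t, (p*t + i) : ℕ) : ℤ) - (-1)^(t*(p+1)) * ((∏ i ∈ Iset p t, i : ℕ) : ℤ) := by
  have h := prodCong p t hp ht
  have hpow : ((p:ℤ))^(2*(t.factorization p + 1)) = ((p^(2*(t.factorization p + 1)) : ℕ) : ℤ) := by
    push_cast; ring
  rw [hpow, ← ZMod.intCast_zmod_eq_zero_iff_dvd]
  push_cast
  push_cast at h
  rw [sub_eq_zero]
  exact h

lemma prod_Icc_id (n : ℕ) : (∏ i ∈ Finset.Icc 1 n, i) = n ! := by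
  rw [← Finset.Ico_add_one_right_eq_Icc]
  exact Finset.prod_Ico_id_eq_factorial n

lemma prod_shift (m n : ℕ) : ∏ i ∈ Finset.Icc 1 n, (m + i) = (∏ i ∈ Finset.Icc (m+1) (m+n), i) := by
  rw [← Finset.image_add_left_Icc, Finset.prod_image]
  intro a _ b _ h
  simp only at h
  omega

lemma doubleFact (n : ℕ) : (2*n)! = n ! * ∏ i ∈ Finset.Icc 1 n, (n + i) := by
  have h1 : ∏ i ∈ Finset.Icc 1 n, (n + i) = (∏ i ∈ Finset.Ico (n+1) (2*n+1), i) := by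
    rw [prod_shift, ← Finset.Ico_add_one_right_eq_Icc, show n+n+1 = 2*n+1 by omega]
  have h2 : n ! = (∏ i ∈ Finset.Ico 1 (n+1), i) := (Finset.prod_Ico_id_eq_factorial n).symm
  have h3 : (2*n)! = (∏ i ∈ Finset.Ico 1 (2*n+1), i) := (Finset.prod_Ico_id_eq_factorial (2*n)).symm
  rw [h1, h2, h3]
  exact (Finset.prod_Ico_consecutive (fun i : ℕ => i) (by omega) (by omega)).symm

lemma filt_eq (p t : ℕ) (hp : 0 < p) :
    (Finset.Icc 1 (p*t)).filter (fun i => p ∣ i) = (Finset.Icc 1 t).image (fun j => p * j) := by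
  ext i
  simp only [Finset.mem_filter, Finset.mem_Icc, Finset.mem_image]
  constructor
  · rintro ⟨⟨h1, h2⟩, j, rfl⟩
    refine ⟨j, ⟨?_, ?_⟩, rfl⟩
    · rcases Nat.eq_zero_or_pos j with h | h
      · subst h; omega
      · exact h
    · exact Nat.le_of_mul_le_mul_left h2 hp
  · rintro ⟨j, ⟨hj1, hj2⟩, rfl⟩
    exact ⟨⟨Nat.mul_pos hp hj1, Nat.mul_le_mul_left p hj2⟩, Dvd.intro j rfl⟩

lemma ident2 (p t : ℕ) (hp : p.Prime) (ht : 0 < t) :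
    ((2*(p*t)).choose (p*t) : ℤ) * ((∏ i ∈ Iset p t, i : ℕ) : ℤ) =
      ((2*t).choose t : ℤ) * ((∏ i ∈ Iset p t, (p*t + i) : ℕ) : ℤ) := by
  have hc0 : 0 < p * t := Nat.mul_pos hp.pos ht
  -- c! = p^t * t! * B
  have hfact : (p*t) ! = p^t * t ! * (∏ i ∈ Iset p t, i) := by
    rw [← prod_Icc_id (p*t), ← Finset.prod_filter_mul_prod_filter_not (Finset.Icc 1 (p*t)) (fun i => p ∣ i),
      filt_eq p t hp.pos,
      Finset.prod_image (fun a _ b _ h => Nat.eq_of_mul_eq_mul_left hp.pos h)]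
    have : ∏ j ∈ Finset.Icc 1 t, (p * j) = p^t * t ! := by
      rw [Finset.prod_mul_distrib, Finset.prod_const, Nat.card_Icc, prod_Icc_id]
      simp
    rw [this]
    rfl
  -- Q = p^t * G * A
  have hQ : ∏ i ∈ Finset.Icc 1 (p*t), (p*t + i) =
      p^t * (∏ j ∈ Finset.Icc 1 t, (t + j)) * ∏ i ∈ Iset p t, (p*t + i) := by
    rw [← Finset.prod_filter_mul_prod_filter_not (Finset.Icc 1 (p*t)) (fun i => p ∣ i),
      filt_eq p t hp.pos,
      Finset.prod_image (fun a _ b _ h => Nat.eq_of_mul_eq_mul_left hp.pos h)]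
    have : ∏ j ∈ Finset.Icc 1 t, (p*t + p * j) = p^t * ∏ j ∈ Finset.Icc 1 t, (t + j) := by
      have heq : ∀ j, p*t + p*j = p * (t + j) := fun j => by ring
      simp only [heq]
      rw [Finset.prod_mul_distrib, Finset.prod_const, Nat.card_Icc]
      simp
    rw [this]
    rfl
  have hG : (2*t) ! = t ! * ∏ j ∈ Finset.Icc 1 t, (t + j) := doubleFact t
  have hC2c : (2*(p*t)) ! = (p*t) ! * ∏ i ∈ Finset.Icc 1 (p*t), (p*t + i) := doubleFact (p*t)
  have e5 : (2*(p*t)).choose (p*t) * (p*t) ! * (p*t) ! = (2*(p*t)) ! := by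
    have := Nat.choose_mul_factorial_mul_factorial (show p*t ≤ 2*(p*t) by omega)
    rwa [show 2*(p*t) - p*t = p*t by omega] at this
  have e6 : (2*t).choose t * t ! * t ! = (2*t) ! := by
    have := Nat.choose_mul_factorial_mul_factorial (show t ≤ 2*t by omega)
    rwa [show 2*t - t = t by omega] at this
  -- cast everything to ℤ
  have F1 : ((p*t) ! : ℤ) = (p:ℤ)^t * (t ! : ℤ) * ((∏ i ∈ Iset p t, i : ℕ) : ℤ) := by
    exact_mod_cast congrArg (Nat.cast : ℕ → ℤ) hfact
  have F2 : ((∏ i ∈ Finset.Icc 1 (p*t), (p*t + i) : ℕ) : ℤ) =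
      (p:ℤ)^t * ((∏ j ∈ Finset.Icc 1 t, (t + j) : ℕ) : ℤ) * ((∏ i ∈ Iset p t, (p*t + i) : ℕ) : ℤ) := by
    exact_mod_cast congrArg (Nat.cast : ℕ → ℤ) hQ
  have F3 : ((2*(p*t)) ! : ℤ) = ((p*t) ! : ℤ) * ((∏ i ∈ Finset.Icc 1 (p*t), (p*t + i) : ℕ) : ℤ) := by
    exact_mod_cast congrArg (Nat.cast : ℕ → ℤ) hC2c
  have F4 : ((2*t) ! : ℤ) = (t ! : ℤ) * ((∏ j ∈ Finset.Icc 1 t, (t + j) : ℕ) : ℤ) := by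
    exact_mod_cast congrArg (Nat.cast : ℕ → ℤ) hG
  have F5 : ((2*(p*t)).choose (p*t) : ℤ) * ((p*t) ! : ℤ) * ((p*t) ! : ℤ) = ((2*(p*t)) ! : ℤ) := by
    exact_mod_cast congrArg (Nat.cast : ℕ → ℤ) e5
  have F6 : ((2*t).choose t : ℤ) * (t ! : ℤ) * (t ! : ℤ) = ((2*t) ! : ℤ) := by
    exact_mod_cast congrArg (Nat.cast : ℕ → ℤ) e6
  have hM : ((p:ℤ)^t * (t ! : ℤ) * (t ! : ℤ) * ((p*t) ! : ℤ)) ≠ 0 := by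
    apply mul_ne_zero
    apply mul_ne_zero
    apply mul_ne_zero
    · exact pow_ne_zero _ (by exact_mod_cast hp.pos.ne')
    · exact_mod_cast (Nat.factorial_pos t).ne'
    · exact_mod_cast (Nat.factorial_pos t).ne'
    · exact_mod_cast (Nat.factorial_pos (p*t)).ne'
  apply mul_left_cancel₀ hM
  linear_combination (-((t ! : ℤ) * ((2*(p*t)).choose (p*t) : ℤ) * ((p*t) ! : ℤ))) * F1 +
    (t ! : ℤ) * F5 + (t ! : ℤ) * F3 + ((t ! : ℤ) * ((p*t) ! : ℤ)) * F2 +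
    (-((p:ℤ)^t * ((p*t) ! : ℤ) * ((∏ i ∈ Iset p t, (p*t + i) : ℕ) : ℤ))) * F6 +
    (-((p:ℤ)^t * ((p*t) ! : ℤ) * ((∏ i ∈ Iset p t, (p*t + i) : ℕ) : ℤ))) * F4

lemma choose_central_half (t : ℕ) (ht : 0 < t) :
    (2*t).choose t = 2 * ((2*t - 1).choose (t-1)) := by
  rcases t with _ | s
  · omega
  · show (2*(s+1)).choose (s+1) = 2 * ((2*(s+1) - 1).choose s)
    rw [show 2*(s+1) = (2*s+1) + 1 by ring, show (2*s+1) + 1 - 1 = 2*s+1 by omega,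
      Nat.choose_succ_succ (2*s+1) s]
    have h3 : (2*s+1).choose (s+1) = (2*s+1).choose s := by
      have h := Nat.choose_symm (show s ≤ 2*s+1 by omega)
      rw [show 2*s+1 - s = s+1 by omega] at h
      exact h
    simp only [Nat.succ_eq_add_one] at *
    omega

def Ffun (n : ℕ) : ℤ := (-1)^n * ((2*n - 1).choose (n-1) : ℤ)

theorem keyStep (p t : ℕ) (hp : p.Prime) (ht : 0 < t) :
    (p:ℤ)^(2*(t.factorization p + 1)) ∣ Ffun (p*t) - Ffun t := by
  have hc0 : 0 < p * t := Nat.mul_pos hp.pos ht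
  set X : ℤ := ((2*(p*t) - 1).choose (p*t - 1) : ℤ) with hX
  set Y : ℤ := ((2*t - 1).choose (t-1) : ℤ) with hY
  set A : ℤ := ((∏ i ∈ Iset p t, (p*t + i) : ℕ) : ℤ) with hA
  set B : ℤ := ((∏ i ∈ Iset p t, i : ℕ) : ℤ) with hB
  set ε : ℤ := (-1)^(t*(p+1)) with hε
  have hXB : X * B = Y * A := by
    have h2 := ident2 p t hp ht
    have hx : ((2*(p*t)).choose (p*t) : ℤ) = 2 * X := by
      rw [hX]; exact_mod_cast congrArg (Nat.cast : ℕ → ℤ) (choose_central_half (p*t) hc0)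
    have hy : ((2*t).choose t : ℤ) = 2 * Y := by
      rw [hY]; exact_mod_cast congrArg (Nat.cast : ℕ → ℤ) (choose_central_half t ht)
    rw [hx, hy] at h2
    have : (2:ℤ) * (X * B) = 2 * (Y * A) := by linear_combination h2
    exact mul_left_cancel₀ two_ne_zero this
  have hcong : (p:ℤ)^(2*(t.factorization p + 1)) ∣ A - ε * B := keyCong p t hp ht
  have hstep : (p:ℤ)^(2*(t.factorization p + 1)) ∣ B * (X - ε*Y) := by
    have heq : B * (X - ε*Y) = Y * (A - ε*B) := by linear_combination hXB
    rw [heq]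
    exact Dvd.dvd.mul_left hcong Y
  have hBcop : IsCoprime ((p:ℤ)^(2*(t.factorization p + 1))) B := by
    have hBn : Nat.Coprime (p^(2*(t.factorization p + 1))) (∏ i ∈ Iset p t, i) := by
      apply Nat.Coprime.prod_right
      intro i hi
      exact Nat.Coprime.pow_left _ ((Nat.Prime.coprime_iff_not_dvd hp).mpr (Iset_mem hi).2.2)
    have := Nat.isCoprime_iff_coprime.mpr hBn
    rw [hB]
    exact_mod_cast this
  have hdvd : (p:ℤ)^(2*(t.factorization p + 1)) ∣ X - ε*Y :=
    hBcop.dvd_of_dvd_mul_left hstep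
  have hsign : Ffun (p*t) - Ffun t = (-1)^(p*t) * (X - ε*Y) := by
    simp only [Ffun]
    rw [← hX, ← hY, hε]
    have he : (-1:ℤ)^(p*t) * (-1:ℤ)^(t*(p+1)) = (-1)^t := by
      rw [← pow_add, show p*t + t*(p+1) = 2*(p*t) + t by ring, pow_add, pow_mul]
      norm_num
    linear_combination Y * he
  rw [hsign]
  exact Dvd.dvd.mul_left hdvd _

open ArithmeticFunction in
theorem primePowDvd (p a m : ℕ) (hp : p.Prime) (ha : 1 ≤ a) (hm : 0 < m) (hpm : ¬ p ∣ m) :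
    (p:ℤ)^(2*a) ∣ ∑ k ∈ (p^a * m).divisors, (moebius k : ℤ) * Ffun ((p^a * m) / k) := by
  have hd0 : p^a * m ≠ 0 := Nat.mul_ne_zero (pow_ne_zero a hp.pos.ne') (by omega)
  have hpm0 : p * m ≠ 0 := Nat.mul_ne_zero hp.pos.ne' (by omega)
  have hsub : (p*m).divisors ⊆ (p^a * m).divisors :=
    Nat.divisors_subset_of_dvd hd0 (mul_dvd_mul (dvd_pow_self p (by omega)) dvd_rfl)
  have hvanish : ∀ x ∈ (p^a * m).divisors, x ∉ (p*m).divisors →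
      (moebius x : ℤ) * Ffun ((p^a * m) / x) = 0 := by
    intro x hx hnx
    obtain ⟨hxd, -⟩ := Nat.mem_divisors.mp hx
    suffices h : moebius x = 0 by rw [h]; push_cast; ring
    by_contra hne
    have hsq : Squarefree x := (ArithmeticFunction.moebius_ne_zero_iff_squarefree).mp hne
    have hx0 : x ≠ 0 := hsq.ne_zero
    have hxpm : x ∣ p * m := by
      rw [← Nat.factorization_le_iff_dvd hx0 hpm0]
      rw [Finsupp.le_iff]
      intro q hq
      have hq' : q.Prime := Nat.prime_of_mem_primeFactors (by rwa [Nat.support_factorization] at hq)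
      have hqx : q ∣ x := Nat.dvd_of_mem_primeFactors (by rwa [Nat.support_factorization] at hq)
      have h1 : x.factorization q ≤ 1 := Squarefree.natFactorization_le_one q hsq
      have hqpm : q ∣ p * m := by
        rcases (Nat.Prime.dvd_mul hq').mp (hqx.trans hxd) with h | h
        · exact Dvd.dvd.mul_right (hq'.dvd_of_dvd_pow h) m
        · exact Dvd.dvd.mul_left h p
      have h2 : 1 ≤ (p*m).factorization q := Nat.Prime.factorization_pos_of_dvd hq' hpm0 hqpm
      omega
    exact hnx (Nat.mem_divisors.mpr ⟨hxpm, hpm0⟩)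
  rw [← Finset.sum_subset hsub hvanish]
  -- sum over divisors of p*m
  have hset : (p*m).divisors = m.divisors ∪ m.divisors.image (fun j => p * j) := by
    ext k
    simp only [Nat.mem_divisors, Finset.mem_union, Finset.mem_image]
    constructor
    · rintro ⟨hk, -⟩
      by_cases hpk : p ∣ k
      · obtain ⟨j, rfl⟩ := hpk
        right
        exact ⟨j, ⟨(mul_dvd_mul_iff_left hp.pos.ne').mp hk, by omega⟩, rfl⟩
      · left
        refine ⟨?_, by omega⟩
        exact (Nat.Coprime.dvd_of_dvd_mul_left ((hp.coprime_iff_not_dvd.mpr hpk).symm) hk)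
    · rintro (⟨hk, -⟩ | ⟨j, ⟨hj, -⟩, rfl⟩)
      · exact ⟨Dvd.dvd.mul_left hk p, hpm0⟩
      · exact ⟨mul_dvd_mul_left p hj, hpm0⟩
  have hdisj : Disjoint m.divisors (m.divisors.image (fun j => p * j)) := by
    rw [Finset.disjoint_right]
    rintro k hk hkm
    obtain ⟨j, -, rfl⟩ := Finset.mem_image.mp hk
    obtain ⟨hkd, -⟩ := Nat.mem_divisors.mp hkm
    exact hpm (dvd_trans (Dvd.intro j rfl) hkd)
  rw [hset, Finset.sum_union hdisj,
    Finset.sum_image (fun x _ y _ h => Nat.eq_of_mul_eq_mul_left hp.pos h),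
    ← Finset.sum_add_distrib]
  apply Finset.dvd_sum
  intro k hk
  obtain ⟨hkm, -⟩ := Nat.mem_divisors.mp hk
  have hcop : Nat.Coprime p k :=
    hp.coprime_iff_not_dvd.mpr (fun h => hpm (h.trans hkm))
  have hμ : (moebius (p*k) : ℤ) = -(moebius k) := by
    rw [ArithmeticFunction.isMultiplicative_moebius.map_mul_of_coprime hcop,
      ArithmeticFunction.moebius_apply_prime hp]
    ring
  obtain ⟨j, rfl⟩ := hkm
  obtain ⟨b, rfl⟩ : ∃ b, a = b + 1 := ⟨a - 1, by omega⟩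
  have hk0 : 0 < k := by
    rcases Nat.eq_zero_or_pos k with h | h
    · subst h; simp at hm
    · exact h
  have hj0 : 0 < j := by
    rcases Nat.eq_zero_or_pos j with h | h
    · subst h; simp at hm
    · exact h
  have hdk : (p^(b+1) * (k*j)) / k = p * (p^b * j) := by
    rw [Nat.mul_div_assoc _ (Dvd.intro j rfl), Nat.mul_div_cancel_left j hk0,
      ← mul_assoc, ← pow_succ']
  have hdpk : (p^(b+1) * (k*j)) / (p*k) = p^b * j := by
    have heq : p^(b+1) * (k*j) = (p*k) * (p^b * j) := by ring
    rw [heq, Nat.mul_div_cancel_left _ (Nat.mul_pos hp.pos hk0)]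
  have hu0 : 0 < p^b * j := Nat.mul_pos (pow_pos hp.pos _) hj0
  have hpj : ¬ p ∣ j := fun h => hpm (h.trans (dvd_mul_left j k))
  have hufac : (p^b * j).factorization p = b := by
    rw [Nat.factorization_mul (pow_ne_zero _ hp.pos.ne') hj0.ne', Finsupp.add_apply,
      Nat.Prime.factorization_pow hp, Finsupp.single_apply,
      Nat.factorization_eq_zero_of_not_dvd hpj]
    simp
  have hkey := keyStep p (p^b * j) hp hu0
  rw [hufac] at hkey
  rw [hdk, hdpk, hμ]
  have hcomb : (moebius k : ℤ) * Ffun (p * (p^b * j)) + (-(moebius k : ℤ)) * Ffun (p^b * j)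
      = (moebius k : ℤ) * (Ffun (p * (p^b * j)) - Ffun (p^b * j)) := by ring
  rw [hcomb]
  exact Dvd.dvd.mul_left hkey _

/-- Integrality of the Klemm–Pandharipande invariants of `Tot(O(-1) ⊕ O(-2) → P²)`
(Theorem 6.3 for `P²(1,4)`): for every `d ≥ 1`, `d²` divides
`∑_{k ∣ d} μ(k) (-1)^{d/k} C(2d/k - 1, d/k - 1)`. -/
theorem stmt7 (d : ℕ) (hd : 1 ≤ d) :
    ((d : ℤ) ^ 2) ∣
      ∑ k ∈ d.divisors,
        ArithmeticFunction.moebius k * (-1) ^ (d / k) *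
          ((2 * (d / k) - 1).choose (d / k - 1) : ℤ) := by
  have hd0 : d ≠ 0 := by omega
  have hrw : ∀ k ∈ d.divisors, (ArithmeticFunction.moebius k : ℤ) * (-1) ^ (d / k) *
      ((2 * (d / k) - 1).choose (d / k - 1) : ℤ)
      = (ArithmeticFunction.moebius k : ℤ) * Ffun (d / k) := by
    intro k _
    simp only [Ffun]
    ring
  rw [Finset.sum_congr rfl hrw]
  have hmain : ∀ p ∈ d.primeFactors, (p:ℤ)^(2 * d.factorization p) ∣
      ∑ k ∈ d.divisors, (ArithmeticFunction.moebius k : ℤ) * Ffun (d / k) := by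
    intro p hpf
    have hp := Nat.prime_of_mem_primeFactors hpf
    have ha : 1 ≤ d.factorization p := by
      have := Nat.Prime.factorization_pos_of_dvd hp hd0 (Nat.dvd_of_mem_primeFactors hpf)
      omega
    have hmd : ¬ p ∣ d / p ^ d.factorization p := Nat.not_dvd_ordCompl hp hd0
    have hm0 : 0 < d / p ^ d.factorization p := Nat.ordCompl_pos p hd0
    have h := primePowDvd p (d.factorization p) (d / p ^ d.factorization p) hp ha hm0 hmd
    rwa [Nat.ordProj_mul_ordCompl_eq_self d p] at h
  have hd_prod : ∏ p ∈ d.primeFactors, p ^ d.factorization p = d := by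
    conv_rhs => rw [← Nat.factorization_prod_pow_eq_self hd0]
    rfl
  have hsq : ((d : ℤ))^2 = ∏ p ∈ d.primeFactors, (p:ℤ)^(2 * d.factorization p) := by
    conv_lhs => rw [← hd_prod]
    push_cast
    rw [← Finset.prod_pow]
    refine Finset.prod_congr rfl fun p _ => ?_
    rw [← pow_mul, mul_comm]
  rw [hsq]
  refine Finset.prod_dvd_of_coprime ?_ hmain
  intro x hx y hy hxy
  simp only [Function.onFun]
  have hxp := Nat.prime_of_mem_primeFactors (Finset.mem_coe.mp hx)
  have hyp := Nat.prime_of_mem_primeFactors (Finset.mem_coe.mp hy)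
  exact (Nat.isCoprime_iff_coprime.mpr ((Nat.coprime_primes hxp hyp).mpr hxy)).pow
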